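/- Let φ:ℕ→ℝ⁺ be any positive function. If Σ_{n=1}^∞ 2^{−φ(n)} = ∞, then the set F(φ)={x∈(0,1]: d_n(x)≥φ(n) for infinitely many n} has full Lebesgue measure in (0,1]. -/
import Mathlib


open MeasureTheory Filter Set Real
open scoped ENNReal

/-- First digit of the power-2-decaying Gauss-like expansion:
`⌈y⌉` in the paper denotes the smallest integer strictly larger than `y`. -/
noncomputable def p2dD1 (x : ℝ) : ℕ := (⌊-Real.logb 2 x⌋ + 1).toNat

/-- The Gauss-like map `T x = 2^n x - 1` on `(1/2^n, 1/2^(n-1)]`. -/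
noncomputable def p2dT (x : ℝ) : ℝ := 2 ^ p2dD1 x * x - 1

/-- `n`-th digit (`n ≥ 1`) of the P2DGL expansion. -/
noncomputable def p2dDigit (n : ℕ) (x : ℝ) : ℕ := p2dD1 (p2dT^[n-1] x)

/-- Maximal digit among the first `n` digits. -/
noncomputable def p2dL (n : ℕ) (x : ℝ) : ℕ :=
  Finset.sup (Finset.Icc 1 n) (fun i => p2dDigit i x)

lemma le_p2dD1_iff {x : ℝ} (hx : x ∈ Set.Ioc (0:ℝ) 1) (m : ℕ) :
    m + 1 ≤ p2dD1 x ↔ x ≤ ((2:ℝ)^m)⁻¹ := by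
  have hx0 : 0 < x := hx.1
  have hlog : 0 ≤ -Real.logb 2 x := by
    have := Real.logb_nonpos (by norm_num : (1:ℝ) < 2) hx0.le hx.2
    linarith
  have hfl : (0:ℤ) ≤ ⌊-Real.logb 2 x⌋ := Int.le_floor.mpr (by exact_mod_cast hlog)
  unfold p2dD1
  rw [Int.le_toNat (by linarith)]
  push_cast
  rw [show ((m:ℤ) + 1 ≤ ⌊-Real.logb 2 x⌋ + 1 ↔ (m:ℤ) ≤ ⌊-Real.logb 2 x⌋) from by omega,
    Int.le_floor]
  push_cast
  rw [le_neg, Real.logb_le_iff_le_rpow (by norm_num) hx0,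
    Real.rpow_neg (by norm_num), Real.rpow_natCast]

lemma one_le_p2dD1 {x : ℝ} (hx : x ∈ Set.Ioc (0:ℝ) 1) : 1 ≤ p2dD1 x := by
  have := (le_p2dD1_iff hx 0).mpr (by simpa using hx.2)
  simpa using this

lemma p2dD1_eq_iff {x : ℝ} (hx : x ∈ Set.Ioc (0:ℝ) 1) (k : ℕ) :
    p2dD1 x = k + 1 ↔ x ∈ Set.Ioc (((2:ℝ)^(k+1))⁻¹) (((2:ℝ)^k)⁻¹) := by
  constructor
  · intro h
    refine ⟨?_, (le_p2dD1_iff hx k).mp (le_of_eq h.symm)⟩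
    by_contra hc
    push_neg at hc
    have := (le_p2dD1_iff hx (k+1)).mpr hc
    omega
  · rintro ⟨h1, h2⟩
    have hk : k + 1 ≤ p2dD1 x := (le_p2dD1_iff hx k).mpr h2
    have hk2 : ¬ (k + 2 ≤ p2dD1 x) := by
      rw [le_p2dD1_iff hx (k+1)]
      exact not_le.mpr h1
    omega

lemma p2dT_mem {x : ℝ} (hx : x ∈ Set.Ioc (0:ℝ) 1) : p2dT x ∈ Set.Ioc (0:ℝ) 1 := by
  obtain ⟨k, hk⟩ : ∃ k, p2dD1 x = k + 1 := ⟨p2dD1 x - 1, by have := one_le_p2dD1 hx; omega⟩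
  have h := (p2dD1_eq_iff hx k).mp hk
  have h2 : (0:ℝ) < 2 ^ (k+1) := by positivity
  have hk2 : (0:ℝ) < 2 ^ k := by positivity
  have h1 : 1 < 2 ^ (k+1) * x := by
    calc (1:ℝ) = 2 ^ (k+1) * ((2:ℝ)^(k+1))⁻¹ := by field_simp
    _ < 2 ^ (k+1) * x := by exact (mul_lt_mul_iff_right₀ h2).mpr h.1
  have h3 : 2 ^ (k+1) * x ≤ 2 := by
    calc (2:ℝ) ^ (k+1) * x ≤ 2 ^ (k+1) * ((2:ℝ)^k)⁻¹ := by
          exact mul_le_mul_of_nonneg_left h.2 h2.le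
    _ = 2 := by rw [pow_succ]; field_simp
  unfold p2dT
  rw [hk]
  constructor <;> [linarith; linarith]

lemma measurable_p2dD1 : Measurable p2dD1 := by
  have h1 : Measurable fun x : ℝ => -Real.logb 2 x := by
    simp only [Real.logb]
    exact (Real.measurable_log.div measurable_const).neg
  exact (measurable_from_top (f := fun z : ℤ => (z + 1).toNat)).comp h1.floor

lemma measurable_p2dT : Measurable p2dT := by
  unfold p2dT
  exact (((measurable_from_top (f := fun n : ℕ => (2:ℝ)^n)).comp
    measurable_p2dD1).mul measurable_id).sub measurable_const

lemma measurable_p2dDigit (n : ℕ) : Measurable (p2dDigit n) :=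
  measurable_p2dD1.comp (measurable_p2dT.iterate (n-1))

lemma p2d_Ioc_subset (n : ℕ) :
    Set.Ioc (((2:ℝ)^(n+1))⁻¹) (((2:ℝ)^n)⁻¹) ⊆ Set.Ioc (0:ℝ) 1 := by
  intro x hx
  have h1 : (0:ℝ) < ((2:ℝ)^(n+1))⁻¹ := by positivity
  have h2 : ((2:ℝ)^n)⁻¹ ≤ 1 := by
    rw [inv_le_one_iff₀]; right; exact one_le_pow₀ (by norm_num)
  exact ⟨h1.trans hx.1, hx.2.trans h2⟩

lemma p2d_slice (k : ℕ) {S : Set ℝ} (hS : S ⊆ Set.Ioc 0 1) :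
    volume (Set.Ioc (((2:ℝ)^(k+1))⁻¹) (((2:ℝ)^k)⁻¹) ∩ p2dT ⁻¹' S)
      = ((2:ℝ≥0∞)^(k+1))⁻¹ * volume S := by
  have hpow : (0:ℝ) < 2^(k+1) := by positivity
  have hpk : (0:ℝ) < 2^k := by positivity
  have hset : Set.Ioc (((2:ℝ)^(k+1))⁻¹) (((2:ℝ)^k)⁻¹) ∩ p2dT ⁻¹' S
      = (fun x : ℝ => 2^(k+1) * x - 1) ⁻¹' S := by
    ext x
    simp only [Set.mem_inter_iff, Set.mem_preimage]
    constructor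
    · rintro ⟨hxI, hT⟩
      have hx : x ∈ Set.Ioc (0:ℝ) 1 := p2d_Ioc_subset k hxI
      have hd : p2dD1 x = k + 1 := (p2dD1_eq_iff hx k).mpr hxI
      have : p2dT x = 2^(k+1) * x - 1 := by unfold p2dT; rw [hd]
      rwa [← this]
    · intro hmem
      have h01 := hS hmem
      have hgt : ((2:ℝ)^(k+1))⁻¹ < x := by
        rw [inv_eq_one_div, div_lt_iff₀ hpow]
        have := h01.1
        linarith [mul_comm x ((2:ℝ)^(k+1))]
      have hle : x ≤ ((2:ℝ)^k)⁻¹ := by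
        rw [← one_div, le_div_iff₀ hpk]
        nlinarith [h01.2, pow_succ (2:ℝ) k]
      have hxI : x ∈ Set.Ioc (((2:ℝ)^(k+1))⁻¹) (((2:ℝ)^k)⁻¹) := ⟨hgt, hle⟩
      have hx : x ∈ Set.Ioc (0:ℝ) 1 := p2d_Ioc_subset k hxI
      have hd : p2dD1 x = k + 1 := (p2dD1_eq_iff hx k).mpr hxI
      have hT : p2dT x = 2^(k+1) * x - 1 := by unfold p2dT; rw [hd]
      exact ⟨hxI, by rwa [hT]⟩
  rw [hset]
  have : (fun x : ℝ => 2^(k+1) * x - 1) ⁻¹' S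
      = (fun x : ℝ => (2:ℝ)^(k+1) * x) ⁻¹' ((fun y : ℝ => y - 1) ⁻¹' S) := by rfl
  rw [this]
  rw [Real.volume_preimage_mul_left (ne_of_gt hpow)]
  have hshift : volume ((fun y : ℝ => y - 1) ⁻¹' S) = volume S := by
    have : (fun y : ℝ => y - 1) ⁻¹' S = (fun y : ℝ => y + (-1)) ⁻¹' S := by
      ext y; simp [sub_eq_add_neg]
    rw [this, measure_preimage_add_right]
  rw [hshift]
  congr 1
  rw [abs_of_pos (by positivity)]
  rw [ENNReal.ofReal_inv_of_pos hpow, ENNReal.ofReal_pow (by norm_num : (0:ℝ) ≤ 2)]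
  norm_num

lemma p2d_step (m : ℕ) {S : Set ℝ} (hS : S ⊆ Set.Ioc 0 1) (hSm : MeasurableSet S) :
    volume {x : ℝ | x ∈ Set.Ioc (0:ℝ) 1 ∧ m + 1 ≤ p2dD1 x ∧ p2dT x ∈ S}
      = ((2:ℝ≥0∞)^m)⁻¹ * volume S := by
  have hset : {x : ℝ | x ∈ Set.Ioc (0:ℝ) 1 ∧ m + 1 ≤ p2dD1 x ∧ p2dT x ∈ S}
      = ⋃ k : ℕ, (Set.Ioc (((2:ℝ)^(m+k+1))⁻¹) (((2:ℝ)^(m+k))⁻¹) ∩ p2dT ⁻¹' S) := by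
    ext x
    simp only [Set.mem_iUnion, Set.mem_inter_iff, Set.mem_setOf_eq, Set.mem_preimage]
    constructor
    · rintro ⟨hx, hm, hT⟩
      obtain ⟨k, hk⟩ : ∃ k, p2dD1 x = m + k + 1 := ⟨p2dD1 x - m - 1, by omega⟩
      exact ⟨k, (p2dD1_eq_iff hx (m+k)).mp hk, hT⟩
    · rintro ⟨k, hxI, hT⟩
      have hx : x ∈ Set.Ioc (0:ℝ) 1 := p2d_Ioc_subset (m+k) hxI
      have := (p2dD1_eq_iff hx (m+k)).mpr hxI
      exact ⟨hx, by omega, hT⟩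
  have hdisj : Pairwise (Function.onFun Disjoint
      fun k => Set.Ioc (((2:ℝ)^(m+k+1))⁻¹) (((2:ℝ)^(m+k))⁻¹) ∩ p2dT ⁻¹' S) := by
    intro i j hij
    have key : ∀ i j : ℕ, i < j →
        Disjoint (Set.Ioc (((2:ℝ)^(m+i+1))⁻¹) (((2:ℝ)^(m+i))⁻¹))
          (Set.Ioc (((2:ℝ)^(m+j+1))⁻¹) (((2:ℝ)^(m+j))⁻¹)) := by
      intro i j hlt
      rw [Set.Ioc_disjoint_Ioc]
      calc min (((2:ℝ)^(m+i))⁻¹) (((2:ℝ)^(m+j))⁻¹) ≤ ((2:ℝ)^(m+j))⁻¹ := min_le_right _ _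
      _ ≤ ((2:ℝ)^(m+i+1))⁻¹ := by
            apply inv_anti₀ (by positivity)
            exact pow_le_pow_right₀ (by norm_num) (by omega)
      _ ≤ max (((2:ℝ)^(m+i+1))⁻¹) (((2:ℝ)^(m+j+1))⁻¹) := le_max_left _ _
    rcases lt_or_gt_of_ne hij with h | h
    · exact ((key i j h).mono Set.inter_subset_left Set.inter_subset_left)
    · exact ((key j i h).symm.mono Set.inter_subset_left Set.inter_subset_left)
  have hmeas : ∀ k : ℕ, MeasurableSet
      (Set.Ioc (((2:ℝ)^(m+k+1))⁻¹) (((2:ℝ)^(m+k))⁻¹) ∩ p2dT ⁻¹' S) :=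
    fun k => measurableSet_Ioc.inter (measurable_p2dT hSm)
  rw [hset, measure_iUnion hdisj hmeas]
  have hterm : ∀ k : ℕ, volume
      (Set.Ioc (((2:ℝ)^(m+k+1))⁻¹) (((2:ℝ)^(m+k))⁻¹) ∩ p2dT ⁻¹' S)
      = ((2:ℝ≥0∞)⁻¹)^(m+k+1) * volume S := by
    intro k
    rw [p2d_slice (m+k) hS, ← ENNReal.inv_pow]
  simp_rw [hterm]
  rw [ENNReal.tsum_mul_right]
  congr 1
  have : ∀ k : ℕ, ((2:ℝ≥0∞)⁻¹)^(m+k+1) = ((2:ℝ≥0∞)⁻¹)^(m+1) * ((2:ℝ≥0∞)⁻¹)^k := by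
    intro k; rw [← pow_add]; ring_nf
  simp_rw [this]
  rw [ENNReal.tsum_mul_left, ENNReal.tsum_geometric, ENNReal.one_sub_inv_two, inv_inv,
    pow_succ, mul_assoc, ENNReal.inv_mul_cancel two_ne_zero ENNReal.ofNat_ne_top, mul_one,
    ENNReal.inv_pow]

lemma p2dDigit_succ_eq (j : ℕ) (x : ℝ) : p2dDigit (j+1) x = p2dD1 (p2dT^[j] x) := by
  simp [p2dDigit]

lemma p2dDigit_shift (j : ℕ) (x : ℝ) : p2dDigit (j+2) x = p2dDigit (j+1) (p2dT x) := by
  simp [p2dDigit, Function.iterate_succ_apply]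

lemma p2d_cylinder : ∀ (N : ℕ) (g : ℕ → ℕ),
    volume {x : ℝ | x ∈ Set.Ioc (0:ℝ) 1 ∧ ∀ j < N, g j ≤ p2dDigit (j+1) x}
      = ∏ j ∈ Finset.range N, ((2:ℝ≥0∞)^(g j - 1))⁻¹ := by
  intro N
  induction N with
  | zero =>
    intro g
    simp only [Nat.not_lt_zero, false_implies, implies_true, and_true, Finset.range_zero,
      Finset.prod_empty]
    have : {x : ℝ | x ∈ Set.Ioc (0:ℝ) 1} = Set.Ioc (0:ℝ) 1 := rfl
    rw [this, Real.volume_Ioc]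
    norm_num
  | succ N ih =>
    intro g
    set S := {y : ℝ | y ∈ Set.Ioc (0:ℝ) 1 ∧ ∀ j < N, g (j+1) ≤ p2dDigit (j+1) y} with hSdef
    have hSsub : S ⊆ Set.Ioc 0 1 := fun y hy => hy.1
    have hSm : MeasurableSet S := by
      have : S = Set.Ioc (0:ℝ) 1 ∩ ⋂ j ∈ Finset.range N,
          (p2dDigit (j+1)) ⁻¹' Set.Ici (g (j+1)) := by
        ext y
        simp only [hSdef, Set.mem_setOf_eq, Set.mem_inter_iff, Set.mem_iInter,
          Set.mem_preimage, Set.mem_Ici, Finset.mem_range]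
      rw [this]
      exact measurableSet_Ioc.inter (MeasurableSet.biInter (Set.to_countable _)
        (fun j _ => (measurable_p2dDigit (j+1)) measurableSet_Ici))
    have hset : {x : ℝ | x ∈ Set.Ioc (0:ℝ) 1 ∧ ∀ j < N + 1, g j ≤ p2dDigit (j+1) x}
        = {x : ℝ | x ∈ Set.Ioc (0:ℝ) 1 ∧ (g 0 - 1) + 1 ≤ p2dD1 x ∧ p2dT x ∈ S} := by
      ext x
      simp only [Set.mem_setOf_eq, hSdef]
      constructor
      · rintro ⟨hx, hall⟩
        have h1 := one_le_p2dD1 hx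
        have h0 : g 0 ≤ p2dDigit 1 x := hall 0 (by omega)
        rw [p2dDigit_succ_eq 0 x] at h0
        simp only [Function.iterate_zero, id_eq] at h0
        refine ⟨hx, by omega, p2dT_mem hx, fun j hj => ?_⟩
        have := hall (j+1) (by omega)
        rwa [p2dDigit_shift j x] at this
      · rintro ⟨hx, hd1, hTx, hTall⟩
        have h1 := one_le_p2dD1 hx
        refine ⟨hx, fun j hj => ?_⟩
        match j with
        | 0 =>
          rw [p2dDigit_succ_eq 0 x]
          simp only [Function.iterate_zero, id_eq]
          omega
        | j + 1 =>
          rw [p2dDigit_shift j x]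
          exact hTall j (by omega)
    rw [hset, p2d_step _ hSsub hSm, ih (fun i => g (i+1)), Finset.prod_range_succ']
    rw [mul_comm]

/-- divergence part of the Borel–Bernstein theorem. -/
theorem p2d_BorelBernstein_div (φ : ℕ → ℝ) (hφ : ∀ n, 0 < φ n)
    (hsum : ¬ Summable (fun n => (2:ℝ) ^ (-φ n))) :
    volume {x : ℝ | x ∈ Set.Ioc (0:ℝ) 1 ∧
        ∃ᶠ n in atTop, (φ n ≤ (p2dDigit n x : ℝ))} = 1 := by
  classical
  set m : ℕ → ℕ := fun n => ⌈φ n⌉₊ with hm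
  have hm1 : ∀ n, 1 ≤ m n := fun n => Nat.ceil_pos.mpr (hφ n)
  set s : ℕ → Set ℝ := fun j =>
    {x : ℝ | x ∈ Set.Ioc (0:ℝ) 1 ∧ m (j+1) ≤ p2dDigit (j+1) x} with hs
  have hsub : ∀ j, s j ⊆ Set.Ioc 0 1 := fun j x hx => hx.1
  have hs_meas : ∀ j, MeasurableSet (s j) := by
    intro j
    have : s j = Set.Ioc (0:ℝ) 1 ∩ (p2dDigit (j+1)) ⁻¹' Set.Ici (m (j+1)) := by
      ext x
      simp only [hs, Set.mem_setOf_eq, Set.mem_inter_iff, Set.mem_preimage, Set.mem_Ici]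
    rw [this]
    exact measurableSet_Ioc.inter ((measurable_p2dDigit (j+1)) measurableSet_Ici)
  have hvol : ∀ j, volume (s j) = ((2:ℝ≥0∞)^(m (j+1) - 1))⁻¹ := by
    intro j
    have hg : s j = {x : ℝ | x ∈ Set.Ioc (0:ℝ) 1 ∧
        ∀ i < j + 1, (if i = j then m (j+1) else 0) ≤ p2dDigit (i+1) x} := by
      ext x
      simp only [hs, Set.mem_setOf_eq]
      constructor
      · rintro ⟨hx, hd⟩
        refine ⟨hx, fun i hi => ?_⟩
        split_ifs with h
        · subst h; exact hd
        · omega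
      · rintro ⟨hx, hd⟩
        have := hd j (by omega)
        simp only [if_pos rfl] at this
        exact ⟨hx, this⟩
    rw [hg, p2d_cylinder (j+1) _,
      Finset.prod_eq_single j (fun i _ hne => by simp [hne]) (by simp)]
    simp
  set μ : Measure ℝ := volume.restrict (Set.Ioc 0 1) with hμ
  have hμs : ∀ j, μ (s j) = ((2:ℝ≥0∞)^(m (j+1) - 1))⁻¹ := by
    intro j
    rw [hμ, Measure.restrict_apply (hs_meas j),
      Set.inter_eq_self_of_subset_left (hsub j), hvol j]
  have hprob : IsProbabilityMeasure μ := ⟨by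
    rw [hμ, Measure.restrict_apply_univ, Real.volume_Ioc]; norm_num⟩
  have hindep : ProbabilityTheory.iIndepSet s μ := by
    rw [ProbabilityTheory.iIndepSet_iff_meas_biInter hs_meas]
    intro F
    set N := F.sup id + 1 with hN
    have hFN : ∀ i ∈ F, i < N := fun i hi => Nat.lt_succ_of_le (Finset.le_sup (f := id) hi)
    have hinter : (⋂ i ∈ F, s i) ∩ Set.Ioc (0:ℝ) 1
        = {x : ℝ | x ∈ Set.Ioc (0:ℝ) 1 ∧
            ∀ j < N, (if j ∈ F then m (j+1) else 0) ≤ p2dDigit (j+1) x} := by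
      ext x
      simp only [Set.mem_inter_iff, Set.mem_iInter, Set.mem_setOf_eq, hs]
      constructor
      · rintro ⟨hI, hx⟩
        refine ⟨hx, fun j hj => ?_⟩
        split_ifs with h
        · exact (hI j h).2
        · omega
      · rintro ⟨hx, hall⟩
        refine ⟨fun i hi => ⟨hx, ?_⟩, hx⟩
        have := hall i (hFN i hi)
        simpa [hi] using this
    rw [hμ, Measure.restrict_apply' measurableSet_Ioc, hinter, p2d_cylinder N _]
    have hcongr : ∀ j ∈ Finset.range N,
        ((2:ℝ≥0∞)^((if j ∈ F then m (j+1) else 0) - 1))⁻¹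
        = if j ∈ F then ((2:ℝ≥0∞)^(m (j+1) - 1))⁻¹ else 1 := by
      intro j _
      split_ifs with h <;> simp
    rw [Finset.prod_congr rfl hcongr, Finset.prod_ite_mem,
      (Finset.inter_eq_right).mpr (fun i hi => Finset.mem_range.mpr (hFN i hi))]
    exact (Finset.prod_congr rfl (fun i hi => (hμs i).symm))
  have hdiv : (∑' j, μ (s j)) = ∞ := by
    by_contra h
    have hsummable : Summable (fun j => (μ (s j)).toReal) := ENNReal.summable_toReal h
    have hcomp : ∀ j : ℕ, (2:ℝ) ^ (-φ (j+1)) ≤ (μ (s j)).toReal := by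
      intro j
      rw [hμs j]
      have htr : ((2:ℝ≥0∞) ^ (m (j+1) - 1))⁻¹.toReal = ((2:ℝ) ^ (m (j+1) - 1))⁻¹ := by
        rw [ENNReal.toReal_inv]
        norm_num
      rw [htr]
      have hle : ((m (j+1) - 1 : ℕ) : ℝ) ≤ φ (j+1) := by
        have h1 := hm1 (j+1)
        have h2 : (⌈φ (j+1)⌉₊ : ℝ) < φ (j+1) + 1 := Nat.ceil_lt_add_one (hφ (j+1)).le
        rw [Nat.cast_sub h1, Nat.cast_one]
        simp only [hm]
        linarith
      calc (2:ℝ) ^ (-φ (j+1)) ≤ (2:ℝ) ^ (-((m (j+1) - 1 : ℕ) : ℝ)) := by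
            apply Real.rpow_le_rpow_of_exponent_le (by norm_num)
            linarith
      _ = ((2:ℝ) ^ (m (j+1) - 1))⁻¹ := by
            rw [← Real.rpow_natCast 2 (m (j+1) - 1), ← Real.rpow_neg (by norm_num)]
    have hsφ : Summable (fun j : ℕ => (2:ℝ) ^ (-φ (j+1))) :=
      Summable.of_nonneg_of_le (fun j => Real.rpow_nonneg (by norm_num) _) hcomp hsummable
    exact hsum ((summable_nat_add_iff 1).mp hsφ)
  have hlim := ProbabilityTheory.measure_limsup_eq_one hs_meas hindep hdiv
  have hGeq : {x : ℝ | x ∈ Set.Ioc (0:ℝ) 1 ∧ ∃ᶠ n in atTop, (φ n ≤ (p2dDigit n x : ℝ))}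
      = limsup s atTop ∩ Set.Ioc (0:ℝ) 1 := by
    ext x
    simp only [Set.mem_setOf_eq, Set.mem_inter_iff, Filter.mem_limsup_iff_frequently_mem]
    constructor
    · rintro ⟨hx, hf⟩
      refine ⟨?_, hx⟩
      rw [frequently_atTop] at hf ⊢
      intro a
      obtain ⟨n, hn, hPn⟩ := hf (a+1)
      refine ⟨n - 1, by omega, ?_⟩
      simp only [hs, Set.mem_setOf_eq]
      rw [show n - 1 + 1 = n by omega]
      exact ⟨hx, Nat.ceil_le.mpr hPn⟩
    · rintro ⟨hf, hx⟩
      refine ⟨hx, ?_⟩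
      rw [frequently_atTop] at hf ⊢
      intro a
      obtain ⟨j, hj, hPj⟩ := hf a
      refine ⟨j + 1, by omega, ?_⟩
      have := hPj.2
      exact Nat.ceil_le.mp this
  rw [hGeq, ← Measure.restrict_apply' measurableSet_Ioc, ← hμ]
  exact hlim
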